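/- Let M be a representation of Q on (V_i) and A = (A_i : E_i → V_i)_{i∈Q0} a family of linear maps. The following are equivalent: (a) for every subspace L ⊆ k and every subrepresentation U of M such that A_i(E_i) ⊆ U_i for all i ∈ Q0 whenever L = k, one has |α|·dim L − Σ_{i∈Q0} dim U_i ≤ 0 (i.e. the framed pair (M,A) is semi-stable for the stability parameter c^α with value |α| at the framing vertex and −1 at every vertex of Q); (b) the inequality in (a) is strict for every such pair (L,U) other than (0,(0)_i) and (k,(V_i)_i) (i.e. (M,A) is c^α-stable); (c) no subrepresentation U of M with U ≠ (V_i)_i satisfies A_i(E_i) ⊆ U_i for all i ∈ Q0; (d) for every j ∈ Q0 the linear map ⊕_p E_{s(p)} → V_j, (w_p)_p ↦ Σ_p M_p(A_{s(p)}(w_p)), where p runs over all paths in Q with target j (including the trivial path at j), is surjective (i.e. the homomorphism φ_{M,A} : P_β → M is surjective). -/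

import Mathlib

open Module

/-- Paths in a quiver with arrow set `Q1`, source map `src` and target map `tgt`. -/
inductive QPath {Q0 Q1 : Type} (src tgt : Q1 → Q0) : Q0 → Q0 → Type
  | nil (i : Q0) : QPath src tgt i i
  | cons {i : Q0} (a : Q1) (p : QPath src tgt i (src a)) : QPath src tgt i (tgt a)

/-- The composite linear map `M_p` along a path `p`. -/
def pathMap {k Q0 Q1 : Type} [Field k] {src tgt : Q1 → Q0} {V : Q0 → Type}
    [∀ i, AddCommGroup (V i)] [∀ i, Module k (V i)]
    (M : ∀ a : Q1, V (src a) →ₗ[k] V (tgt a)) :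
    {i j : Q0} → QPath src tgt i j → (V i →ₗ[k] V j)
  | _, _, QPath.nil _ => LinearMap.id
  | _, _, QPath.cons a p => (M a).comp (pathMap M p)

/-- A subrepresentation is stable under all path maps. -/
lemma pathMap_mem {k Q0 Q1 : Type} [Field k] {src tgt : Q1 → Q0} {V : Q0 → Type}
    [∀ i, AddCommGroup (V i)] [∀ i, Module k (V i)]
    (M : ∀ a : Q1, V (src a) →ₗ[k] V (tgt a))
    (U : ∀ i, Submodule k (V i))
    (hU : ∀ a : Q1, ∀ x ∈ U (src a), M a x ∈ U (tgt a)) :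
    ∀ {i j : Q0} (p : QPath src tgt i j) (x : V i), x ∈ U i → pathMap M p x ∈ U j := by
  intro i j p
  induction p with
  | nil => intro x hx; simpa [pathMap] using hx
  | cons a p ih =>
    intro x hx
    have := hU a _ (ih x hx)
    simpa [pathMap] using this

/-- Engel–Reineke: for a framed pair `(M,A)` with `A i : E i →ₗ V i`, the following are
equivalent: (a) `(M,A)` is `c^α`-semi-stable, (b) `(M,A)` is `c^α`-stable, (c) no proper
subrepresentation of `M` contains all the images of the `A i`, (d) the homomorphism
`φ_{M,A} : P_β → M` is surjective at every vertex. -/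
theorem statement2 {k Q0 Q1 : Type} [Field k] [Fintype Q0] [Fintype Q1] [DecidableEq Q0]
    (src tgt : Q1 → Q0) [∀ i j, Fintype (QPath src tgt i j)]
    (V : Q0 → Type) [∀ i, AddCommGroup (V i)] [∀ i, Module k (V i)]
    [∀ i, FiniteDimensional k (V i)]
    (E : Q0 → Type) [∀ i, AddCommGroup (E i)] [∀ i, Module k (E i)]
    [∀ i, FiniteDimensional k (E i)]
    (M : ∀ a : Q1, V (src a) →ₗ[k] V (tgt a))
    (A : ∀ i : Q0, E i →ₗ[k] V i) :
    List.TFAE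
      [ (∀ (L : Submodule k k) (U : ∀ i : Q0, Submodule k (V i)),
          (∀ a : Q1, ∀ x ∈ U (src a), M a x ∈ U (tgt a)) →
          (L = ⊤ → ∀ i : Q0, LinearMap.range (A i) ≤ U i) →
          (∑ i : Q0, (finrank k (V i) : ℤ)) * (finrank k L : ℤ)
            - ∑ i : Q0, (finrank k (U i) : ℤ) ≤ 0),
        (∀ (L : Submodule k k) (U : ∀ i : Q0, Submodule k (V i)),
          (∀ a : Q1, ∀ x ∈ U (src a), M a x ∈ U (tgt a)) →
          (L = ⊤ → ∀ i : Q0, LinearMap.range (A i) ≤ U i) →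
          ¬(L = ⊥ ∧ ∀ i, U i = ⊥) → ¬(L = ⊤ ∧ ∀ i, U i = ⊤) →
          (∑ i : Q0, (finrank k (V i) : ℤ)) * (finrank k L : ℤ)
            - ∑ i : Q0, (finrank k (U i) : ℤ) < 0),
        (¬ ∃ U : ∀ i : Q0, Submodule k (V i),
          (∀ a : Q1, ∀ x ∈ U (src a), M a x ∈ U (tgt a)) ∧
          (¬ ∀ i, U i = ⊤) ∧ (∀ i : Q0, LinearMap.range (A i) ≤ U i)),
        (∀ j : Q0, Function.Surjective
          (fun w : ∀ p : Σ i : Q0, QPath src tgt i j, E p.1 =>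
            ∑ p : Σ i : Q0, QPath src tgt i j, pathMap M p.2 (A p.1 (w p)))) ] := by
  tfae_have 1 → 3 := by
    intro h1
    rintro ⟨U, hU, hne, hA⟩
    have h := h1 ⊤ U hU (fun _ => hA)
    rw [finrank_top, finrank_self] at h
    have hterm : ∀ i ∈ Finset.univ,
        (0:ℤ) ≤ (finrank k (V i) : ℤ) - (finrank k (U i) : ℤ) := by
      intro i _
      have := Submodule.finrank_le (U i)
      omega
    have hsum : ∑ i : Q0, ((finrank k (V i) : ℤ) - (finrank k (U i) : ℤ)) = 0 := by
      have hle : ∑ i : Q0, ((finrank k (V i) : ℤ) - (finrank k (U i) : ℤ)) ≤ 0 := by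
        rw [Finset.sum_sub_distrib]; push_cast at h; linarith
      exact le_antisymm hle (Finset.sum_nonneg hterm)
    have hall := (Finset.sum_eq_zero_iff_of_nonneg hterm).mp hsum
    apply hne
    intro i
    have hi := hall i (Finset.mem_univ i)
    exact Submodule.eq_top_of_finrank_eq (by omega)
  tfae_have 3 → 4 := by
    intro h3 j
    classical
    set W : ∀ i : Q0, Submodule k (V i) := fun i =>
      ⨆ p : Σ l : Q0, QPath src tgt l i, LinearMap.range ((pathMap M p.2).comp (A p.1))
      with hW
    have hWsub : ∀ a : Q1, ∀ x ∈ W (src a), M a x ∈ W (tgt a) := by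
      intro a x hx
      refine Submodule.iSup_induction (motive := fun y => M a y ∈ W (tgt a)) _ hx
        (fun p y hy => ?_) (by simp) ?_
      · obtain ⟨e, rfl⟩ := hy
        have hc : pathMap M (QPath.cons a p.2) = (M a).comp (pathMap M p.2) := by
          rw [pathMap]
        have hm := le_iSup (fun q : Σ l : Q0, QPath src tgt l (tgt a) =>
          LinearMap.range ((pathMap M q.2).comp (A q.1))) ⟨p.1, QPath.cons a p.2⟩
          (⟨e, rfl⟩ : _ ∈ LinearMap.range
            ((pathMap M (QPath.cons a p.2)).comp (A p.1)))
        simpa [hc] using hm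
      · intro y z hy hz
        rw [map_add]; exact Submodule.add_mem _ hy hz
    have hWA : ∀ i : Q0, LinearMap.range (A i) ≤ W i := by
      intro i
      have : LinearMap.range ((pathMap M (QPath.nil i)).comp (A i)) =
          LinearMap.range (A i) := by simp [pathMap]
      rw [← this]
      exact le_iSup (fun q : Σ l : Q0, QPath src tgt l i =>
        LinearMap.range ((pathMap M q.2).comp (A q.1))) ⟨i, QPath.nil i⟩
    have hWtop : ∀ i : Q0, W i = ⊤ := by
      by_contra hc
      exact h3 ⟨W, hWsub, fun h => hc h, hWA⟩
    intro v
    have hv : v ∈ W j := by rw [hWtop j]; trivial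
    refine Submodule.iSup_induction
      (motive := fun v => ∃ w : ∀ p : Σ i : Q0, QPath src tgt i j, E p.1,
        ∑ p : Σ i : Q0, QPath src tgt i j, pathMap M p.2 (A p.1 (w p)) = v)
      _ hv (fun p y hy => ?_) ⟨0, by simp⟩ ?_
    · obtain ⟨e, rfl⟩ := hy
      refine ⟨Pi.single p e, ?_⟩
      rw [Finset.sum_eq_single p]
      · simp
      · intro q _ hq
        rw [Pi.single_eq_of_ne hq]
        simp
      · intro h; exact absurd (Finset.mem_univ p) h
    · rintro y z ⟨w₁, h₁⟩ ⟨w₂, h₂⟩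
      exact ⟨w₁ + w₂, by
        simp only [Pi.add_apply, map_add, Finset.sum_add_distrib, h₁, h₂]⟩
  tfae_have 4 → 2 := by
    intro h4 L U hU hA hnb hnt
    rcases eq_bot_or_eq_top L with hL | hL
    · subst hL
      have ⟨i, hi⟩ : ∃ i, U i ≠ ⊥ := by
        by_contra hc
        push_neg at hc
        exact hnb ⟨rfl, hc⟩
      have hpos : 0 < (finrank k (U i) : ℤ) := by
        have : finrank k (U i) ≠ 0 := fun h =>
          hi ((Submodule.finrank_eq_zero).mp h)
        omega
      have hsum : (finrank k (U i) : ℤ) ≤ ∑ l : Q0, (finrank k (U l) : ℤ) :=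
        Finset.single_le_sum (f := fun l => (finrank k (U l) : ℤ))
          (fun l _ => by positivity) (Finset.mem_univ i)
      rw [finrank_bot]
      push_cast
      linarith
    · exfalso
      subst hL
      apply hnt
      refine ⟨rfl, fun i => ?_⟩
      rw [eq_top_iff]
      intro v _
      obtain ⟨w, hw⟩ := h4 i v
      rw [← hw]
      exact Submodule.sum_mem _ (fun p _ =>
        pathMap_mem M U hU p.2 _ (hA rfl p.1 ⟨w p, rfl⟩))
  tfae_have 2 → 1 := by
    intro h2 L U hU hA
    by_cases hb : L = ⊥ ∧ ∀ i, U i = ⊥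
    · obtain ⟨hL, hUb⟩ := hb
      subst hL
      rw [finrank_bot]
      have : ∀ i : Q0, (finrank k (U i) : ℤ) = 0 := fun i => by
        rw [hUb i, finrank_bot]; rfl
      simp [this]
    · by_cases ht : L = ⊤ ∧ ∀ i, U i = ⊤
      · obtain ⟨hL, hUt⟩ := ht
        subst hL
        rw [finrank_top, finrank_self]
        have : ∀ i : Q0, (finrank k (U i) : ℤ) = (finrank k (V i) : ℤ) := fun i => by
          rw [hUt i]; norm_cast; exact (finrank_top k (V i))
        simp [this]
      · exact le_of_lt (h2 L U hU hA hb ht)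
  tfae_finish
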